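/- arXiv:2107.00205 — 5 statements merged into one kernel-verified Lean document; each statement's English description precedes it below -/
import Mathlib

section
/- Let X be a compact metric space with no isolated points, T : X → X continuous, and suppose the set Trans(X,T) of points with dense forward orbit is nonempty. For a continuous f : X → ℝ, if there exists a transitive point x whose Birkhoff averages of f do not converge (i.e. x ∈ I(f,T) ∩ Trans(X,T)), then the irregular set I(f,T) is residual in X. -/
open Filter Topology

private lemma birk_sum_bound {X : Type*} (T : X → X) (f : X → ℝ) {C : ℝ}
    (hC : ∀ z, |f z| ≤ C) (y : X) (n : ℕ) :
    |∑ i ∈ Finset.range n, f (T^[i] y)| ≤ n * C := by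
  calc |∑ i ∈ Finset.range n, f (T^[i] y)| ≤ ∑ i ∈ Finset.range n, |f (T^[i] y)| :=
        Finset.abs_sum_le_sum_abs _ _
    _ ≤ ∑ _i ∈ Finset.range n, C := Finset.sum_le_sum fun i _ => hC _
    _ = n * C := by simp [mul_comm]

private lemma birk_shift_est {X : Type*} (T : X → X) (f : X → ℝ) {C : ℝ}
    (hC : ∀ z, |f z| ≤ C) (x : X) (k n : ℕ) (hn : 1 ≤ n) :
    |(n : ℝ)⁻¹ * ∑ i ∈ Finset.range n, f (T^[i] (T^[k] x))
      - ((k + n : ℕ) : ℝ)⁻¹ * ∑ i ∈ Finset.range (k + n), f (T^[i] x)|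
      ≤ 2 * k * C / n := by
  have hC0 : 0 ≤ C := le_trans (abs_nonneg _) (hC x)
  have hsum : ∑ i ∈ Finset.range n, f (T^[i] (T^[k] x))
      = ∑ i ∈ Finset.range (k + n), f (T^[i] x) - ∑ i ∈ Finset.range k, f (T^[i] x) := by
    have h1 : ∑ i ∈ Finset.range k, f (T^[i] x)
        + ∑ i ∈ Finset.Ico k (k + n), f (T^[i] x)
        = ∑ i ∈ Finset.range (k + n), f (T^[i] x) :=
      Finset.sum_range_add_sum_Ico _ (Nat.le_add_right k n)
    have h2 : ∑ i ∈ Finset.Ico k (k + n), f (T^[i] x)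
        = ∑ i ∈ Finset.range n, f (T^[i] (T^[k] x)) := by
      rw [Finset.sum_Ico_eq_sum_range]
      simp only [Nat.add_sub_cancel_left]
      refine Finset.sum_congr rfl fun i _ => ?_
      rw [← Function.iterate_add_apply, Nat.add_comm k i]
    linarith [h1, h2]
  set S1 := ∑ i ∈ Finset.range k, f (T^[i] x) with hS1
  set S2 := ∑ i ∈ Finset.range (k + n), f (T^[i] x) with hS2
  have hb1 : |S1| ≤ k * C := birk_sum_bound T f hC x k
  have hb2 : |S2| ≤ (k + n) * C := by
    have := birk_sum_bound T f hC x (k + n)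
    simpa using this
  have hn0 : (0 : ℝ) < n := by exact_mod_cast hn
  have hkn0 : (0 : ℝ) < (k : ℝ) + n := by positivity
  rw [hsum]
  have hcast : ((k + n : ℕ) : ℝ) = (k : ℝ) + n := by push_cast; ring
  rw [hcast]
  have key : (n : ℝ)⁻¹ * (S2 - S1) - ((k : ℝ) + n)⁻¹ * S2
      = S2 * ((k : ℝ) / (n * ((k : ℝ) + n))) - S1 / n := by
    field_simp
    ring
  rw [key]
  have h1 : |S2 * ((k : ℝ) / (n * ((k : ℝ) + n)))| ≤ k * C / n := by
    rw [abs_mul]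
    have hfrac : |(k : ℝ) / (n * ((k : ℝ) + n))| = (k : ℝ) / (n * ((k : ℝ) + n)) := by
      rw [abs_of_nonneg]; positivity
    rw [hfrac]
    calc |S2| * ((k : ℝ) / (n * ((k : ℝ) + n)))
        ≤ (((k : ℝ) + n) * C) * ((k : ℝ) / (n * ((k : ℝ) + n))) := by
          apply mul_le_mul_of_nonneg_right hb2; positivity
      _ = k * C / n := by field_simp
  have h2 : |S1 / n| ≤ k * C / n := by
    rw [abs_div, abs_of_nonneg hn0.le]
    gcongr
  calc |S2 * ((k : ℝ) / (n * ((k : ℝ) + n))) - S1 / n|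
      ≤ |S2 * ((k : ℝ) / (n * ((k : ℝ) + n)))| + |S1 / n| := abs_sub _ _
    _ ≤ k * C / n + k * C / n := add_le_add h1 h2
    _ = 2 * k * C / n := by ring

/-- If the averages at `x` are frequently below `α'`, then for every `k` the averages at
`T^[k] x` are frequently below any `α > α'`. -/
private lemma birk_freq_lt {X : Type*} (T : X → X) (f : X → ℝ) {C : ℝ}
    (hC : ∀ z, |f z| ≤ C) (x : X) {α' α : ℝ} (hαα : α' < α)
    (hfreq : ∃ᶠ m : ℕ in atTop, (m : ℝ)⁻¹ * ∑ i ∈ Finset.range m, f (T^[i] x) < α')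
    (k : ℕ) :
    ∃ᶠ n : ℕ in atTop, (n : ℝ)⁻¹ * ∑ i ∈ Finset.range n, f (T^[i] (T^[k] x)) < α := by
  have hC0 : 0 ≤ C := le_trans (abs_nonneg _) (hC x)
  rw [frequently_atTop]
  intro N
  -- choose M large enough
  obtain ⟨M, hM1, hMN, hMbig⟩ : ∃ M : ℕ, 1 ≤ M ∧ N ≤ M ∧ 2 * k * C / M < α - α' := by
    have h : Tendsto (fun M : ℕ => 2 * k * C / M) atTop (𝓝 0) :=
      tendsto_const_div_atTop_nhds_zero_nat _
    have h2 : ∀ᶠ M : ℕ in atTop, 2 * k * C / M < α - α' := by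
      have := h.eventually (eventually_lt_nhds (by linarith : (0:ℝ) < α - α'))
      exact this
    obtain ⟨M, hM⟩ := ((eventually_ge_atTop 1).and ((eventually_ge_atTop N).and h2)).exists
    exact ⟨M, hM.1, hM.2.1, hM.2.2⟩
  obtain ⟨m, hm, hmlt⟩ := (frequently_atTop.1 hfreq) (k + M)
  refine ⟨m - k, by omega, ?_⟩
  have hmk : k + (m - k) = m := by omega
  have hn1 : 1 ≤ m - k := by omega
  have hest := birk_shift_est T f hC x k (m - k) hn1
  rw [hmk] at hest
  have havg : ((m : ℕ) : ℝ)⁻¹ * ∑ i ∈ Finset.range m, f (T^[i] x) < α' := hmlt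
  have hMn : (M : ℝ) ≤ ((m - k : ℕ) : ℝ) := by exact_mod_cast (by omega : M ≤ m - k)
  have hM0 : (0 : ℝ) < M := by exact_mod_cast hM1
  have hfrac : 2 * k * C / ((m - k : ℕ) : ℝ) ≤ 2 * k * C / M := by
    gcongr
  have := abs_sub_lt_iff.1 (lt_of_le_of_lt (hest.trans hfrac) hMbig)
  linarith [this.1]

theorem stmt6 {X : Type*} [MetricSpace X] [CompactSpace X]
    (h0 : ∀ x : X, Filter.NeBot (𝓝[≠] x))
    (T : X → X) (hT : Continuous T)
    (htrans : {x : X | Dense (Set.range fun n : ℕ => T^[n] x)}.Nonempty)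
    (f : X → ℝ) (hf : Continuous f) (x : X)
    (hx1 : Dense (Set.range fun n : ℕ => T^[n] x))
    (hx2 : ¬ ∃ c : ℝ, Tendsto
      (fun n : ℕ => (n : ℝ)⁻¹ * ∑ i ∈ Finset.range n, f (T^[i] x)) atTop (𝓝 c)) :
    {y : X | ¬ ∃ c : ℝ, Tendsto
      (fun n : ℕ => (n : ℝ)⁻¹ * ∑ i ∈ Finset.range n, f (T^[i] y)) atTop (𝓝 c)}
      ∈ residual X := by
  -- bound on f
  obtain ⟨C0, hC0⟩ := isCompact_univ.exists_bound_of_continuousOn hf.continuousOn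
  set C := max C0 0 with hCdef
  have hC : ∀ z : X, |f z| ≤ C := fun z =>
    le_trans (by simpa using hC0 z trivial) (le_max_left _ _)
  have hCnn : 0 ≤ C := le_max_right _ _
  -- averages
  set A : ℕ → X → ℝ := fun n y => (n : ℝ)⁻¹ * ∑ i ∈ Finset.range n, f (T^[i] y) with hA
  have hAcont : ∀ n, Continuous (A n) := by
    intro n
    exact continuous_const.mul (continuous_finset_sum _ fun i _ => hf.comp (hT.iterate i))
  have hAbd : ∀ n y, |A n y| ≤ C := by
    intro n y
    rcases Nat.eq_zero_or_pos n with h | h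
    · simp [hA, h, hCnn]
    · have := birk_sum_bound T f hC y n
      have hn0 : (0 : ℝ) < n := by exact_mod_cast h
      rw [hA]
      rw [abs_mul, abs_of_nonneg (by positivity : (0:ℝ) ≤ (n:ℝ)⁻¹)]
      calc (n : ℝ)⁻¹ * |∑ i ∈ Finset.range n, f (T^[i] y)| ≤ (n : ℝ)⁻¹ * (n * C) := by
            apply mul_le_mul_of_nonneg_left this (by positivity)
        _ = C := by field_simp
  set u : ℕ → ℝ := fun n => A n x with hu
  have hub : IsBoundedUnder (· ≤ ·) atTop u :=
    ⟨C, eventually_map.2 (Eventually.of_forall fun n => le_trans (le_abs_self _) (hAbd n x))⟩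
  have hlb : IsBoundedUnder (· ≥ ·) atTop u :=
    ⟨-C, eventually_map.2 (Eventually.of_forall fun n => neg_le_of_abs_le (hAbd n x))⟩
  set a := liminf u atTop with ha
  set b := limsup u atTop with hb
  have hab : a < b := by
    rcases lt_or_ge a b with h | h
    · exact h
    · exfalso
      have hba : a = b := le_antisymm (liminf_le_limsup hub hlb) h
      exact hx2 ⟨a, tendsto_of_liminf_eq_limsup rfl hba.symm hub hlb⟩
  set ε := (b - a) / 8 with hε
  have hε0 : 0 < ε := by rw [hε]; linarith
  set α' := a + ε with hα'
  set α := a + 2 * ε with hαd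
  set β := b - 2 * ε with hβd
  set β' := b - ε with hβ'
  have hαβ : α < β := by rw [hαd, hβd, hε]; linarith
  -- frequently below α' and above β' at x
  have hfreq1 : ∃ᶠ m in atTop, u m < α' :=
    frequently_lt_of_liminf_lt hub.isCoboundedUnder_ge (by rw [← ha, hα']; linarith)
  have hfreq2 : ∃ᶠ m in atTop, β' < u m :=
    frequently_lt_of_lt_limsup hlb.isCoboundedUnder_le (by rw [← hb, hβ']; linarith)
  -- transfer to negative function for the upper bound
  have hCneg : ∀ z : X, |(-f) z| ≤ C := fun z => by simpa using hC z
  have hnegavg : ∀ (n : ℕ) (y : X),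
      (n : ℝ)⁻¹ * ∑ i ∈ Finset.range n, (-f) (T^[i] y) = -(A n y) := by
    intro n y
    simp [hA, Finset.sum_neg_distrib, mul_neg]
  have hfreq2' : ∃ᶠ m : ℕ in atTop,
      (m : ℝ)⁻¹ * ∑ i ∈ Finset.range m, (-f) (T^[i] x) < -β' := by
    refine hfreq2.mono fun m hm => ?_
    rw [hnegavg]
    simpa using hm
  -- frequently along the whole orbit
  have horb1 : ∀ k : ℕ, ∃ᶠ n in atTop, A n (T^[k] x) < α :=
    fun k => birk_freq_lt T f hC x (by rw [hα', hαd]; linarith) hfreq1 k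
  have horb2 : ∀ k : ℕ, ∃ᶠ n in atTop, β < A n (T^[k] x) := by
    intro k
    have := birk_freq_lt T (-f) hCneg x
      (show -β' < -β by rw [hβ', hβd]; linarith) hfreq2' k
    refine this.mono fun n hn => ?_
    rw [hnegavg] at hn
    linarith
  -- the dense open sets
  set U : ℕ → Set X := fun N => ⋃ n, ⋃ (_ : N ≤ n), {y | A n y < α} with hU
  set V : ℕ → Set X := fun N => ⋃ n, ⋃ (_ : N ≤ n), {y | β < A n y} with hV
  have hUopen : ∀ N, IsOpen (U N) := fun N =>
    isOpen_iUnion fun n => isOpen_iUnion fun _ => isOpen_lt (hAcont n) continuous_const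
  have hVopen : ∀ N, IsOpen (V N) := fun N =>
    isOpen_iUnion fun n => isOpen_iUnion fun _ => isOpen_lt continuous_const (hAcont n)
  have hUdense : ∀ N, Dense (U N) := by
    intro N
    apply hx1.mono
    rintro _ ⟨k, rfl⟩
    obtain ⟨n, hn, hlt⟩ := frequently_atTop.1 (horb1 k) N
    exact Set.mem_iUnion.2 ⟨n, Set.mem_iUnion.2 ⟨hn, hlt⟩⟩
  have hVdense : ∀ N, Dense (V N) := by
    intro N
    apply hx1.mono
    rintro _ ⟨k, rfl⟩
    obtain ⟨n, hn, hlt⟩ := frequently_atTop.1 (horb2 k) N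
    exact Set.mem_iUnion.2 ⟨n, Set.mem_iUnion.2 ⟨hn, hlt⟩⟩
  have hmem : (⋂ N, U N) ∩ (⋂ N, V N) ∈ residual X := by
    refine inter_mem ?_ ?_
    · exact (countable_iInter_mem.2 fun N => residual_of_dense_open (hUopen N) (hUdense N))
    · exact (countable_iInter_mem.2 fun N => residual_of_dense_open (hVopen N) (hVdense N))
  refine mem_of_superset hmem ?_
  rintro y ⟨hyU, hyV⟩ ⟨c, hc⟩
  have hfU : ∃ᶠ n in atTop, A n y < α := by
    rw [frequently_atTop]
    intro N
    have := Set.mem_iInter.1 hyU N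
    obtain ⟨n, hmem'⟩ := Set.mem_iUnion.1 this
    obtain ⟨hn, hlt⟩ := Set.mem_iUnion.1 hmem'
    exact ⟨n, hn, hlt⟩
  have hfV : ∃ᶠ n in atTop, β < A n y := by
    rw [frequently_atTop]
    intro N
    have := Set.mem_iInter.1 hyV N
    obtain ⟨n, hmem'⟩ := Set.mem_iUnion.1 this
    obtain ⟨hn, hlt⟩ := Set.mem_iUnion.1 hmem'
    exact ⟨n, hn, hlt⟩
  have hcA : Tendsto (fun n => A n y) atTop (𝓝 c) := hc
  have hev : ∀ᶠ n in atTop, |A n y - c| < (β - α) / 2 := by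
    have := hcA.eventually (Metric.ball_mem_nhds c (by linarith : (0:ℝ) < (β - α) / 2))
    simpa [Real.dist_eq] using this
  obtain ⟨n1, hn1α, hn1c⟩ := (hfU.and_eventually hev).exists
  obtain ⟨n2, hn2β, hn2c⟩ := (hfV.and_eventually hev).exists
  have h1 := abs_sub_lt_iff.1 hn1c
  have h2 := abs_sub_lt_iff.1 hn2c
  linarith [h1.2, h2.1]
end

section
/- Let X be a compact metric space, T : X → X continuous, and x ∈ X. Define U_x = {f ∈ C(X,ℝ) : the Birkhoff averages (1/n) Σ_{i=0}^{n−1} f(T^i x) do not converge}. If U_x is nonempty, then U_x is open and dense in C(X,ℝ) with the supremum norm. -/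
open Filter Topology

private lemma birk_lipschitz {X : Type*} [MetricSpace X] [CompactSpace X]
    (T : X → X) (x : X) (f g : C(X, ℝ)) (n : ℕ) :
    |(n : ℝ)⁻¹ * ∑ i ∈ Finset.range n, f (T^[i] x)
      - (n : ℝ)⁻¹ * ∑ i ∈ Finset.range n, g (T^[i] x)| ≤ dist f g := by
  rcases Nat.eq_zero_or_pos n with rfl | hn
  · simpa using dist_nonneg
  have hninv : (0:ℝ) ≤ (n : ℝ)⁻¹ := by positivity
  calc |(n : ℝ)⁻¹ * ∑ i ∈ Finset.range n, f (T^[i] x)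
      - (n : ℝ)⁻¹ * ∑ i ∈ Finset.range n, g (T^[i] x)|
      = (n : ℝ)⁻¹ * |∑ i ∈ Finset.range n, (f (T^[i] x) - g (T^[i] x))| := by
        rw [← mul_sub, abs_mul, abs_of_nonneg hninv, Finset.sum_sub_distrib]
    _ ≤ (n : ℝ)⁻¹ * ∑ i ∈ Finset.range n, |f (T^[i] x) - g (T^[i] x)| := by
        gcongr
        exact Finset.abs_sum_le_sum_abs _ _
    _ ≤ (n : ℝ)⁻¹ * ∑ i ∈ Finset.range n, dist f g := by
        gcongr with i hi
        rw [← Real.dist_eq]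
        exact ContinuousMap.dist_apply_le_dist _
    _ = (n : ℝ)⁻¹ * (n * dist f g) := by rw [Finset.sum_const, Finset.card_range]; ring
    _ = dist f g := by
        field_simp

theorem stmt7 {X : Type*} [MetricSpace X] [CompactSpace X]
    (T : X → X) (hT : Continuous T) (x : X)
    (h : {f : C(X, ℝ) | ¬ ∃ c : ℝ, Tendsto
      (fun n : ℕ => (n : ℝ)⁻¹ * ∑ i ∈ Finset.range n, f (T^[i] x)) atTop (𝓝 c)}.Nonempty) :
    IsOpen {f : C(X, ℝ) | ¬ ∃ c : ℝ, Tendsto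
      (fun n : ℕ => (n : ℝ)⁻¹ * ∑ i ∈ Finset.range n, f (T^[i] x)) atTop (𝓝 c)} ∧
    Dense {f : C(X, ℝ) | ¬ ∃ c : ℝ, Tendsto
      (fun n : ℕ => (n : ℝ)⁻¹ * ∑ i ∈ Finset.range n, f (T^[i] x)) atTop (𝓝 c)} := by
  set A : C(X, ℝ) → ℕ → ℝ :=
    fun f n => (n : ℝ)⁻¹ * ∑ i ∈ Finset.range n, f (T^[i] x) with hAdef
  set C : Set C(X, ℝ) := {f | ∃ c : ℝ, Tendsto (A f) atTop (𝓝 c)} with hCdef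
  have hset : {f : C(X, ℝ) | ¬ ∃ c : ℝ, Tendsto
      (fun n : ℕ => (n : ℝ)⁻¹ * ∑ i ∈ Finset.range n, f (T^[i] x)) atTop (𝓝 c)} = Cᶜ := rfl
  rw [hset]
  -- linearity of A
  have hlin : ∀ (f g : C(X, ℝ)) (t : ℝ) (n : ℕ), A (f + t • g) n = A f n + t * A g n := by
    intro f g t n
    simp only [hAdef, ContinuousMap.add_apply, ContinuousMap.smul_apply, smul_eq_mul,
      smul_eq_mul]
    rw [Finset.sum_add_distrib, ← Finset.mul_sum]
    ring
  have hclosed : IsClosed C := by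
    rw [← isSeqClosed_iff_isClosed]
    intro u f hu huf
    -- show A f is Cauchy
    have hc : CauchySeq (A f) := by
      rw [Metric.cauchySeq_iff]
      intro ε hε
      obtain ⟨k, hk⟩ : ∃ k, dist (u k) f < ε / 3 := by
        obtain ⟨N, hN2⟩ := Metric.tendsto_atTop.mp huf (ε / 3) (by linarith)
        exact ⟨N, hN2 N le_rfl⟩
      obtain ⟨c, hcv⟩ := hu k
      have : CauchySeq (A (u k)) := hcv.cauchySeq
      rw [Metric.cauchySeq_iff] at this
      obtain ⟨N, hN⟩ := this (ε / 3) (by linarith)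
      refine ⟨N, fun m hm n hn => ?_⟩
      have h1 : dist (A f m) (A (u k) m) ≤ dist f (u k) := by
        rw [Real.dist_eq]; exact birk_lipschitz T x f (u k) m
      have h2 : dist (A (u k) n) (A f n) ≤ dist (u k) f := by
        rw [Real.dist_eq]; exact birk_lipschitz T x (u k) f n
      have h3 := hN m hm n hn
      have h4 : dist f (u k) < ε / 3 := by rwa [dist_comm]
      calc dist (A f m) (A f n) ≤ dist (A f m) (A (u k) m) + dist (A (u k) m) (A (u k) n)
            + dist (A (u k) n) (A f n) := dist_triangle4 _ _ _ _
        _ < ε := by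
            have := lt_of_le_of_lt h1 h4
            have := lt_of_le_of_lt h2 hk
            linarith
    exact cauchySeq_tendsto_of_complete hc
  refine ⟨hclosed.isOpen_compl, ?_⟩
  rw [Metric.dense_iff]
  intro f r hr
  by_cases hf : f ∈ C
  · -- perturb f by a small multiple of g ∈ Cᶜ
    obtain ⟨g, hg⟩ := h
    have hgC : g ∉ C := hg
    have hg0 : g ≠ 0 := by
      rintro rfl
      exact hgC ⟨0, by simpa [hAdef] using tendsto_const_nhds⟩
    have hgn : (0:ℝ) < ‖g‖ := norm_pos_iff.mpr hg0
    set t : ℝ := r / (2 * ‖g‖) with ht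
    have ht0 : 0 < t := by positivity
    refine ⟨f + t • g, ?_, ?_⟩
    · rw [Metric.mem_ball, dist_eq_norm, add_sub_cancel_left]
      have hns : ‖t • g‖ = |t| * ‖g‖ := by
        rw [norm_smul t g, Real.norm_eq_abs]
      rw [hns, abs_of_pos ht0, ht]
      rw [div_mul_eq_mul_div]
      rw [div_lt_iff₀ (by positivity)]
      nlinarith
    · intro hmem
      apply hgC
      obtain ⟨c, hc⟩ : ∃ c, Tendsto (A (f + t • g)) atTop (𝓝 c) := hmem
      obtain ⟨c', hc'⟩ := hf
      refine ⟨t⁻¹ * (c - c'), ?_⟩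
      have : ∀ n, A g n = t⁻¹ * (A (f + t • g) n - A f n) := by
        intro n
        rw [hlin f g t n]
        field_simp
        ring
      simp only [hAdef] at this ⊢
      rw [show (fun n : ℕ => (n : ℝ)⁻¹ * ∑ i ∈ Finset.range n, g (T^[i] x)) = fun n => t⁻¹ * (A (f + t • g) n - A f n) from funext this]
      exact (hc.sub hc').const_mul t⁻¹
  · exact ⟨f, Metric.mem_ball_self hr, hf⟩
end

section
/- Let X be a compact metric space, T : X → X continuous, and let r > 0. Then the set R_r* = {f ∈ C(X,ℝ) : E_r^f is residual in X} is closed in C(X,ℝ), where E_r^f = {x ∈ X : limsup_{n→∞} (1/n) Σ_{i=0}^{n−1} f(T^i x) − liminf_{n→∞} (1/n) Σ_{i=0}^{n−1} f(T^i x) ≥ r}. Moreover, if ‖g − f‖ < r/3 and x ∈ E_r^f, then x ∈ E_{r/3}^g. -/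
open Filter Topology

section Aux

variable {X : Type*} [MetricSpace X] [CompactSpace X]

noncomputable def birk (T : X → X) (f : C(X, ℝ)) (x : X) (n : ℕ) : ℝ :=
  (n : ℝ)⁻¹ * ∑ i ∈ Finset.range n, f (T^[i] x)

lemma birk_abs_le (T : X → X) (f : C(X, ℝ)) (x : X) (n : ℕ) :
    |birk T f x n| ≤ ‖f‖ := by
  rcases Nat.eq_zero_or_pos n with rfl | hn
  · simp [birk, norm_nonneg]
  · have hn' : (0 : ℝ) < n := by exact_mod_cast hn
    have h1 : |∑ i ∈ Finset.range n, f (T^[i] x)| ≤ (n : ℝ) * ‖f‖ := by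
      calc |∑ i ∈ Finset.range n, f (T^[i] x)| ≤ ∑ i ∈ Finset.range n, |f (T^[i] x)| :=
            Finset.abs_sum_le_sum_abs _ _
        _ ≤ ∑ _i ∈ Finset.range n, ‖f‖ :=
            Finset.sum_le_sum fun i _ => f.norm_coe_le_norm _
        _ = (n : ℝ) * ‖f‖ := by simp [mul_comm]
    have : |birk T f x n| = (n : ℝ)⁻¹ * |∑ i ∈ Finset.range n, f (T^[i] x)| := by
      rw [birk, abs_mul, abs_of_nonneg (by positivity)]
    rw [this]
    calc (n : ℝ)⁻¹ * |∑ i ∈ Finset.range n, f (T^[i] x)|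
        ≤ (n : ℝ)⁻¹ * ((n : ℝ) * ‖f‖) := by
          exact mul_le_mul_of_nonneg_left h1 (by positivity)
      _ = ‖f‖ := by field_simp

lemma birk_bddAbove (T : X → X) (f : C(X, ℝ)) (x : X) :
    IsBoundedUnder (· ≤ ·) atTop (birk T f x) :=
  isBoundedUnder_of ⟨‖f‖, fun n => (abs_le.1 (birk_abs_le T f x n)).2⟩

lemma birk_bddBelow (T : X → X) (f : C(X, ℝ)) (x : X) :
    IsBoundedUnder (· ≥ ·) atTop (birk T f x) :=
  isBoundedUnder_of ⟨-‖f‖, fun n => (abs_le.1 (birk_abs_le T f x n)).1⟩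

lemma birk_add_bddAbove (T : X → X) (f : C(X, ℝ)) (x : X) (c : ℝ) :
    IsBoundedUnder (· ≤ ·) atTop (fun n => birk T f x n + c) :=
  isBoundedUnder_of ⟨‖f‖ + c, fun n => by
    linarith [(abs_le.1 (birk_abs_le T f x n)).2]⟩

lemma birk_add_bddBelow (T : X → X) (f : C(X, ℝ)) (x : X) (c : ℝ) :
    IsBoundedUnder (· ≥ ·) atTop (fun n => birk T f x n + c) :=
  isBoundedUnder_of ⟨-‖f‖ + c, fun n => by
    simp only [ge_iff_le]; linarith [(abs_le.1 (birk_abs_le T f x n)).1]⟩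

lemma birk_diff (T : X → X) (f g : C(X, ℝ)) (x : X) (n : ℕ) :
    |birk T f x n - birk T g x n| ≤ ‖f - g‖ := by
  have : birk T f x n - birk T g x n = birk T (f - g) x n := by
    simp [birk, Finset.sum_sub_distrib, mul_sub]
  rw [this]
  exact birk_abs_le T (f - g) x n

/-- osc of g ≥ osc of f − 2‖g − f‖ -/
lemma birk_osc_ge (T : X → X) (f g : C(X, ℝ)) (x : X) :
    limsup (birk T f x) atTop - liminf (birk T f x) atTop - 2 * ‖g - f‖ ≤
      limsup (birk T g x) atTop - liminf (birk T g x) atTop := by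
  set c := ‖g - f‖ with hc
  have hls : limsup (birk T f x) atTop ≤ limsup (birk T g x) atTop + c := by
    have h1 : limsup (birk T f x) atTop ≤ limsup (fun n => birk T g x n + c) atTop := by
      refine limsup_le_limsup (Eventually.of_forall fun n => ?_)
        ((birk_bddBelow T f x).isCoboundedUnder_le)
        (birk_add_bddAbove T g x c)
      have hrev : ‖f - g‖ = c := by rw [hc, norm_sub_rev]
      have h2 : birk T f x n - birk T g x n ≤ c := hrev ▸ (abs_le.1 (birk_diff T f g x n)).2
      simp only []
      linarith
    rwa [limsup_add_const atTop (birk T g x) c (birk_bddAbove T g x)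
      ((birk_bddBelow T g x).isCoboundedUnder_le)] at h1
  have hli : liminf (birk T g x) atTop ≤ liminf (birk T f x) atTop + c := by
    have h1 : liminf (birk T g x) atTop ≤ liminf (fun n => birk T f x n + c) atTop := by
      refine liminf_le_liminf (Eventually.of_forall fun n => ?_)
        (birk_bddBelow T g x)
        ((birk_add_bddAbove T f x c).isCoboundedUnder_ge)
      have hrev : ‖f - g‖ = c := by rw [hc, norm_sub_rev]
      have h2 : -c ≤ birk T f x n - birk T g x n := hrev ▸ (abs_le.1 (birk_diff T f g x n)).1
      linarith
    rwa [liminf_add_const atTop (birk T f x) c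
      ((birk_bddAbove T f x).isCoboundedUnder_ge) (birk_bddBelow T f x)] at h1
  linarith

end Aux

theorem stmt15 {X : Type*} [MetricSpace X] [CompactSpace X]
    (T : X → X) (hT : Continuous T) (r : ℝ) (hr : 0 < r) :
    IsClosed {f : C(X, ℝ) |
      {x : X | r ≤ Filter.limsup
            (fun n : ℕ => (n : ℝ)⁻¹ * ∑ i ∈ Finset.range n, f (T^[i] x)) atTop
          - Filter.liminf
            (fun n : ℕ => (n : ℝ)⁻¹ * ∑ i ∈ Finset.range n, f (T^[i] x)) atTop}
        ∈ residual X} ∧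
    ∀ (f g : C(X, ℝ)) (x : X), ‖g - f‖ < r / 3 →
      r ≤ Filter.limsup (fun n : ℕ => (n : ℝ)⁻¹ * ∑ i ∈ Finset.range n, f (T^[i] x)) atTop
        - Filter.liminf (fun n : ℕ => (n : ℝ)⁻¹ * ∑ i ∈ Finset.range n, f (T^[i] x)) atTop →
      r / 3 ≤ Filter.limsup (fun n : ℕ => (n : ℝ)⁻¹ * ∑ i ∈ Finset.range n, g (T^[i] x)) atTop
        - Filter.liminf (fun n : ℕ => (n : ℝ)⁻¹ * ∑ i ∈ Finset.range n, g (T^[i] x)) atTop := by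
  have key : ∀ (f g : C(X, ℝ)) (x : X),
      limsup (birk T f x) atTop - liminf (birk T f x) atTop - 2 * ‖g - f‖ ≤
        limsup (birk T g x) atTop - liminf (birk T g x) atTop := birk_osc_ge T
  constructor
  · rw [← isSeqClosed_iff_isClosed]
    intro F f hF hlim
    have hd : Tendsto (fun k => ‖f - F k‖) atTop (𝓝 0) := by
      have h := tendsto_iff_norm_sub_tendsto_zero.mp hlim
      simpa [norm_sub_rev] using h
    have hres : ∀ k, {x : X | r ≤ limsup (birk T (F k) x) atTop
        - liminf (birk T (F k) x) atTop} ∈ residual X := fun k => hF k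
    have hinter : (⋂ k, {x : X | r ≤ limsup (birk T (F k) x) atTop
        - liminf (birk T (F k) x) atTop}) ∈ residual X :=
      countable_iInter_mem.mpr hres
    refine mem_of_superset hinter ?_
    intro x hx
    simp only [Set.mem_iInter, Set.mem_setOf_eq] at hx ⊢
    have hge : ∀ k, r - 2 * ‖f - F k‖ ≤
        limsup (birk T f x) atTop - liminf (birk T f x) atTop := by
      intro k
      have := key (F k) f x
      linarith [hx k]
    have htend : Tendsto (fun k => r - 2 * ‖f - F k‖) atTop (𝓝 r) := by
      have : Tendsto (fun k => r - 2 * ‖f - F k‖) atTop (𝓝 (r - 2 * 0)) :=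
        tendsto_const_nhds.sub ((hd.const_mul 2))
      simpa using this
    exact le_of_tendsto htend (Eventually.of_forall hge)
  · intro f g x hgf hf
    have hf' : r ≤ limsup (birk T f x) atTop - liminf (birk T f x) atTop := hf
    have h := key f g x
    show r / 3 ≤ limsup (birk T g x) atTop - liminf (birk T g x) atTop
    linarith
end

section
/- Let X be a compact metric space and T : X → X a minimal continuous map. Then for every ε > 0 there exists m(ε) ∈ ℕ such that for all x₁, x₂ ∈ X, every n ∈ ℕ⁺ and every ε′ > 0, there exist l ∈ ℕ with 0 ≤ l ≤ m(ε) and z ∈ X satisfying d(z, x₁) < ε and d(T^{l+j} z, T^j x₂) < ε′ for all 0 ≤ j ≤ n − 1. -/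
open Filter Topology

theorem stmt17 {X : Type*} [MetricSpace X] [CompactSpace X]
    (T : X → X) (hT : Continuous T)
    (hmin : ∀ x : X, Dense (Set.range fun n : ℕ => T^[n] x)) :
    ∀ ε : ℝ, 0 < ε → ∃ m : ℕ, ∀ x₁ x₂ : X, ∀ n : ℕ, 0 < n → ∀ ε' : ℝ, 0 < ε' →
      ∃ l : ℕ, l ≤ m ∧ ∃ z : X, dist z x₁ < ε ∧
        ∀ j : ℕ, j < n → dist (T^[l + j] z) (T^[j] x₂) < ε' := by
  intro ε hε
  have hε2 : 0 < ε / 2 := by linarith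
  -- For each center y, a uniform bound on hitting time of the ball B(y, ε/2).
  have lemA : ∀ y : X, ∃ N : ℕ, ∀ p : X, ∃ k ≤ N, T^[k] p ∈ Metric.ball y (ε / 2) := by
    intro y
    obtain ⟨t, ht⟩ := isCompact_univ.elim_finite_subcover
      (fun k : ℕ => T^[k] ⁻¹' Metric.ball y (ε / 2))
      (fun k => (hT.iterate k).isOpen_preimage _ Metric.isOpen_ball)
      (by
        intro p _
        obtain ⟨q, ⟨k, rfl⟩, hq⟩ := (hmin p).exists_dist_lt y hε2
        exact Set.mem_iUnion.2 ⟨k, by simpa [Metric.mem_ball, dist_comm] using hq⟩)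
    refine ⟨t.sup id, fun p => ?_⟩
    obtain ⟨k, hk, hpk⟩ := Set.mem_iUnion₂.1 (ht (Set.mem_univ p))
    exact ⟨k, Finset.le_sup (f := id) hk, hpk⟩
  choose N hN using lemA
  obtain ⟨F, hF⟩ := isCompact_univ.elim_finite_subcover
    (fun y : X => Metric.ball y (ε / 2)) (fun _ => Metric.isOpen_ball)
    (fun p _ => Set.mem_iUnion.2 ⟨p, Metric.mem_ball_self hε2⟩)
  set m := F.sup N with hm
  refine ⟨m, ?_⟩
  intro x₁ x₂ n hn ε' hε'
  -- choose δ > 0 controlling all T^[j], j < n, near x₂, via the sup metric on Fin n → X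
  have hg : ContinuousAt (fun a : X => (fun j : Fin n => T^[(j : ℕ)] a)) x₂ :=
    (continuous_pi fun j : Fin n => hT.iterate (j : ℕ)).continuousAt
  obtain ⟨δ, hδ0, hδ⟩ := Metric.continuousAt_iff.1 hg ε' hε'
  -- pick a return of T^[m] x₂ close to x₂
  obtain ⟨q, ⟨j₀, rfl⟩, hq⟩ := (hmin (T^[m] x₂)).exists_dist_lt x₂ hδ0
  set w := T^[j₀] (T^[m] x₂) with hw
  have hwδ : dist w x₂ < δ := by rwa [dist_comm] at hq
  -- pick a center near x₁
  obtain ⟨y, hyF, hy⟩ := Set.mem_iUnion₂.1 (hF (Set.mem_univ x₁))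
  obtain ⟨k, hk, hzk⟩ := hN y (T^[j₀] x₂)
  have hkm : k ≤ m := hk.trans (Finset.le_sup hyF)
  refine ⟨m - k, Nat.sub_le _ _, T^[k] (T^[j₀] x₂), ?_, ?_⟩
  · have h1 : dist (T^[k] (T^[j₀] x₂)) y < ε / 2 := Metric.mem_ball.1 hzk
    have h2 : dist x₁ y < ε / 2 := Metric.mem_ball.1 hy
    calc dist (T^[k] (T^[j₀] x₂)) x₁ ≤ dist (T^[k] (T^[j₀] x₂)) y + dist y x₁ :=
          dist_triangle _ _ _
      _ < ε / 2 + ε / 2 := by rw [dist_comm y x₁]; exact add_lt_add h1 h2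
      _ = ε := by ring
  · intro j hj
    have key : T^[m - k + j] (T^[k] (T^[j₀] x₂)) = T^[j] w := by
      simp only [hw, ← Function.iterate_add_apply]
      congr 1
      omega
    rw [key]
    have := hδ hwδ
    have h3 := dist_le_pi_dist (fun i : Fin n => T^[(i : ℕ)] w)
      (fun i : Fin n => T^[(i : ℕ)] x₂) ⟨j, hj⟩
    exact lt_of_le_of_lt h3 this
end

section
/- Let X be a compact metric space, T : X → X continuous, and K a nonempty compact set of T-invariant Borel probability measures (weak* topology). Suppose that for every ε > 0 the set {x ∈ X : V_T(x) ∩ B(K,ε) ≠ ∅} is dense in X, where B(K,ε) is the ε-neighborhood of K in a weak* metric and V_T(x) is the accumulation set of the empirical measures of x. Then the set {x ∈ X : V_T(x) ∩ K ≠ ∅} is residual in X. -/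
open MeasureTheory Filter Topology ENNReal

noncomputable def empMeas {X : Type*} [TopologicalSpace X] [MeasurableSpace X]
    [OpensMeasurableSpace X] (T : X → X) (x : X) (n : ℕ) : ProbabilityMeasure X :=
  ⟨((n + 1 : ℕ) : ℝ≥0∞)⁻¹ • ∑ i ∈ Finset.range (n + 1), Measure.dirac (T^[i] x), by
    refine ⟨?_⟩
    rw [Measure.smul_apply, Measure.finset_sum_apply]
    simp only [measure_univ, Finset.sum_const, Finset.card_range, nsmul_eq_mul, mul_one,
      smul_eq_mul]
    exact ENNReal.inv_mul_cancel (by exact_mod_cast Nat.succ_ne_zero n)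
      (ENNReal.natCast_ne_top _)⟩

/-- `V_T(x)`: the set of weak* accumulation points of the empirical measures
`(1/n) ∑_{i<n} δ_{T^i x}` (indexed so that `empMeas T x n` uses `n+1` points). -/
def VT {X : Type*} [TopologicalSpace X] [MeasurableSpace X] [OpensMeasurableSpace X]
    (T : X → X) (x : X) : Set (ProbabilityMeasure X) :=
  {μ | MapClusterPt μ atTop (empMeas T x)}

/-- The set of `T`-invariant Borel probability measures. -/
def invProb {X : Type*} [TopologicalSpace X] [MeasurableSpace X] (T : X → X) :
    Set (ProbabilityMeasure X) :=
  {μ | (μ : Measure X).map T = (μ : Measure X)}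

lemma empMeas_integral {X : Type*} [MetricSpace X] [MeasurableSpace X] [BorelSpace X]
    (T : X → X) (x : X) (n : ℕ) (f : BoundedContinuousFunction X ℝ) :
    ∫ y, f y ∂(empMeas T x n : Measure X)
      = ((n + 1 : ℝ))⁻¹ * ∑ i ∈ Finset.range (n + 1), f (T^[i] x) := by
  show (∫ y, f y ∂((((n + 1 : ℕ) : ℝ≥0∞))⁻¹ •
      ∑ i ∈ Finset.range (n + 1), Measure.dirac (T^[i] x))) = _
  rw [integral_smul_measure, integral_finset_sum_measure
    (fun i _ => f.integrable (Measure.dirac (T^[i] x)))]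
  simp [integral_dirac, ENNReal.toReal_inv, smul_eq_mul]
  left
  rw [ENNReal.toReal_add (by simp) (by simp)]
  simp

lemma continuous_empMeas {X : Type*} [MetricSpace X] [CompactSpace X] [MeasurableSpace X]
    [BorelSpace X] (T : X → X) (hT : Continuous T) (n : ℕ) :
    Continuous fun x => empMeas T x n := by
  rw [continuous_iff_continuousAt]
  intro x
  unfold ContinuousAt
  rw [ProbabilityMeasure.tendsto_iff_forall_integral_tendsto]
  intro f
  simp only [empMeas_integral]
  exact ((continuous_const.mul (continuous_finset_sum _
    (fun i _ => f.continuous.comp (hT.iterate i)))).tendsto x)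

theorem stmt19 {X : Type*} [MetricSpace X] [CompactSpace X] [MeasurableSpace X] [BorelSpace X]
    (T : X → X) (hT : Continuous T)
    (K : Set (ProbabilityMeasure X)) (hKne : K.Nonempty) (hKc : IsCompact K)
    (hK : K ⊆ invProb T)
    (hdense : ∀ U : Set (ProbabilityMeasure X), IsOpen U → K ⊆ U →
      Dense {x : X | (VT T x ∩ U).Nonempty}) :
    {x : X | (VT T x ∩ K).Nonempty} ∈ residual X := by
  letI : MetricSpace (ProbabilityMeasure X) :=
    TopologicalSpace.metrizableSpaceMetric (ProbabilityMeasure X)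
  set A : ℕ → ℕ → Set X := fun m N =>
    ⋃ n ∈ Set.Ici N, {x | empMeas T x n ∈ Metric.thickening (1 / (m + 1 : ℝ)) K} with hA
  have hmpos : ∀ m : ℕ, (0 : ℝ) < 1 / (m + 1 : ℝ) := fun m => by positivity
  have hUopen : ∀ m : ℕ, IsOpen (Metric.thickening (1 / (m + 1 : ℝ)) K) :=
    fun m => Metric.isOpen_thickening
  have hKU : ∀ m : ℕ, K ⊆ Metric.thickening (1 / (m + 1 : ℝ)) K :=
    fun m => Metric.self_subset_thickening (hmpos m) K
  have hopen : ∀ m N, IsOpen (A m N) := fun m N =>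
    isOpen_iUnion fun n => isOpen_iUnion fun _ =>
      (hUopen m).preimage (continuous_empMeas T hT n)
  have hdenseA : ∀ m N, Dense (A m N) := by
    intro m N
    refine (hdense _ (hUopen m) (hKU m)).mono ?_
    rintro x ⟨μ, hμV, hμU⟩
    have hfreq : ∃ᶠ n in atTop, empMeas T x n ∈ Metric.thickening (1 / (m + 1 : ℝ)) K :=
      (mapClusterPt_iff_frequently.mp hμV) _ ((hUopen m).mem_nhds hμU)
    obtain ⟨n, hnN, hn⟩ := frequently_atTop.mp hfreq N
    exact Set.mem_iUnion.mpr ⟨n, Set.mem_iUnion.mpr ⟨hnN, hn⟩⟩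
  have hres : (⋂ m, ⋂ N, A m N) ∈ residual X := by
    refine countable_iInter_mem.mpr fun m =>
      countable_iInter_mem.mpr fun N =>
      residual_of_dense_open (hopen m N) (hdenseA m N)
  refine mem_of_superset hres ?_
  intro x hx
  simp only [Set.mem_iInter] at hx
  by_contra hx0
  -- For each μ ∈ K, μ is not a cluster point; get an open neighborhood avoided eventually.
  have hno : ∀ μ ∈ K, ∃ W : Set (ProbabilityMeasure X), IsOpen W ∧ μ ∈ W ∧
      ∀ᶠ n in atTop, empMeas T x n ∉ W := by
    intro μ hμ
    have : ¬ MapClusterPt μ atTop (empMeas T x) := fun h => hx0 ⟨μ, h, hμ⟩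
    rw [mapClusterPt_iff_frequently] at this
    push_neg at this
    obtain ⟨s, hs, hsn⟩ := this
    obtain ⟨W, hWs, hWo, hμW⟩ := mem_nhds_iff.mp hs
    exact ⟨W, hWo, hμW, hsn.mono fun n hn hW => hn (hWs hW)⟩
  choose W hWo hμW hWev using hno
  obtain ⟨t, htcov⟩ := hKc.elim_nhds_subcover' (fun μ hμ => W μ hμ)
    (fun μ hμ => (hWo μ hμ).mem_nhds (hμW μ hμ))
  set V : Set (ProbabilityMeasure X) := ⋃ μ ∈ t, W μ.1 μ.2 with hV
  have hVopen : IsOpen V := isOpen_biUnion fun μ _ => hWo _ _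
  have hKV : K ⊆ V := htcov
  obtain ⟨δ, hδpos, hδ⟩ := hKc.exists_thickening_subset_open hVopen hKV
  obtain ⟨m, hm⟩ := exists_nat_one_div_lt hδpos
  have hsub : Metric.thickening (1 / (m + 1 : ℝ)) K ⊆ V :=
    (Metric.thickening_mono hm.le K).trans hδ
  have hev : ∀ᶠ n in atTop, empMeas T x n ∉ V := by
    have : ∀ᶠ n in atTop, ∀ μ ∈ t, empMeas T x n ∉ W μ.1 μ.2 :=
      (Filter.eventually_all_finset t).mpr fun μ _ => hWev μ.1 μ.2
    exact this.mono fun n hn hmem => by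
      obtain ⟨μ, hμt, hμm⟩ := Set.mem_iUnion₂.mp hmem
      exact hn μ hμt hμm
  have hfr : ∃ᶠ n in atTop, empMeas T x n ∈ Metric.thickening (1 / (m + 1 : ℝ)) K := by
    rw [frequently_atTop]
    intro N
    obtain ⟨n, hn, hmem⟩ := Set.mem_iUnion₂.mp (hx m N)
    exact ⟨n, hn, hmem⟩
  obtain ⟨n, hn1, hn2⟩ := (hfr.and_eventually hev).exists
  exact hn2 (hsub hn1)
end
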